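/- Let G=(V,E) be a finite simple undirected graph with β_e > 1 for all e ∈ E and 0 < λ_v ≤ 1 for all v ∈ V, and let the weighted random cluster model have edge parameters q_e = 1 − 1/β_e and vertex weights λ. Define P_SW^Ising = P_{I→R}·P_{R→I} and P_SW^wrc = P_{R→I}·P_{I→R}. Then both Swendsen-Wang transition matrices are positive semidefinite with respect to the respective stationary inner products: for every h : {0,1}^V → ℝ, Σ_{σ∈{0,1}^V} π_Ising(σ)·h(σ)·(P_SW^Ising h)(σ) ≥ 0, and for every g : 2^E → ℝ, Σ_{S⊆E} π_wrc(S)·g(S)·(P_SW^wrc g)(S) ≥ 0, where (P h)(x) = Σ_y P(x,y) h(y). -/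
import Mathlib


open Finset
open scoped Classical

noncomputable section

variable {V : Type*} [Fintype V] [DecidableEq V]

/-- The vertex set of the connected component of `v` in the graph `(V, S)`. -/
def compOf (S : Finset (Sym2 V)) (v : V) : Finset V :=
  Finset.univ.filter fun u => (SimpleGraph.fromEdgeSet (↑S : Set (Sym2 V))).Reachable v u

/-- `κ(V,S)`: the set of vertex sets of connected components of the graph `(V, S)`. -/
def kappa (S : Finset (Sym2 V)) : Finset (Finset V) :=
  Finset.univ.image (compOf S)

/-- `∏_{C ∈ κ(V,S)} (1 + ∏_{u ∈ C} λ_u)`. -/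
def clusterProd (S : Finset (Sym2 V)) (lam : V → ℝ) : ℝ :=
  ∏ C ∈ kappa S, (1 + ∏ u ∈ C, lam u)

/-- Weight of an edge subset `S ⊆ E₀` in the weighted random cluster model. -/
def wtWRC (E₀ : Finset (Sym2 V)) (q : Sym2 V → ℝ) (lam : V → ℝ) (S : Finset (Sym2 V)) : ℝ :=
  (∏ e ∈ S, q e) * (∏ f ∈ E₀ \ S, (1 - q f)) * clusterProd S lam

/-- Partition function of the weighted random cluster model. -/
def ZWRC (E₀ : Finset (Sym2 V)) (q : Sym2 V → ℝ) (lam : V → ℝ) : ℝ :=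
  ∑ S ∈ E₀.powerset, wtWRC E₀ q lam S

/-- The weighted random cluster distribution. -/
def piWRC (E₀ : Finset (Sym2 V)) (q : Sym2 V → ℝ) (lam : V → ℝ) (S : Finset (Sym2 V)) : ℝ :=
  wtWRC E₀ q lam S / ZWRC E₀ q lam

/-- The monochromatic edges of a spin configuration `σ`. -/
def monoEdges (E₀ : Finset (Sym2 V)) (σ : V → Bool) : Finset (Sym2 V) :=
  E₀.filter fun e => (e.map σ).IsDiag

/-- Weight of a spin configuration in the Ising model. -/
def wtIsing (E₀ : Finset (Sym2 V)) (β : Sym2 V → ℝ) (lam : V → ℝ) (σ : V → Bool) : ℝ :=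
  (∏ e ∈ monoEdges E₀ σ, β e) * ∏ v : V, (if σ v then lam v else 1)

/-- Ising partition function. -/
def ZIsing (E₀ : Finset (Sym2 V)) (β : Sym2 V → ℝ) (lam : V → ℝ) : ℝ :=
  ∑ σ : V → Bool, wtIsing E₀ β lam σ

/-- Ising Gibbs distribution. -/
def piIsing (E₀ : Finset (Sym2 V)) (β : Sym2 V → ℝ) (lam : V → ℝ) (σ : V → Bool) : ℝ :=
  wtIsing E₀ β lam σ / ZIsing E₀ β lam

/-- Vertices of odd degree in the graph `(V, S)`. -/
def oddVerts (S : Finset (Sym2 V)) : Finset V :=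
  Finset.univ.filter fun v => Odd (S.filter fun e => v ∈ e).card

/-- Weight of an edge subset in the subgraph-world model. -/
def wtSG (E₀ : Finset (Sym2 V)) (p : Sym2 V → ℝ) (η : V → ℝ) (S : Finset (Sym2 V)) : ℝ :=
  (∏ e ∈ S, p e) * (∏ f ∈ E₀ \ S, (1 - p f)) * ∏ v ∈ oddVerts S, η v

/-- Subgraph-world partition function. -/
def ZSG (E₀ : Finset (Sym2 V)) (p : Sym2 V → ℝ) (η : V → ℝ) : ℝ :=
  ∑ S ∈ E₀.powerset, wtSG E₀ p η S

/-- Subgraph-world distribution. -/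
def piSG (E₀ : Finset (Sym2 V)) (p : Sym2 V → ℝ) (η : V → ℝ) (S : Finset (Sym2 V)) : ℝ :=
  wtSG E₀ p η S / ZSG E₀ p η

/-- The transformation `P_{I→R}` from Ising configurations to edge subsets. -/
def PIR (E₀ : Finset (Sym2 V)) (β : Sym2 V → ℝ) (σ : V → Bool) (S : Finset (Sym2 V)) : ℝ :=
  if S ⊆ monoEdges E₀ σ then
    (∏ e ∈ S, (1 - (β e)⁻¹)) * ∏ f ∈ monoEdges E₀ σ \ S, (β f)⁻¹
  else 0

/-- The transformation `P_{R→I}` from edge subsets to Ising configurations. -/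
def PRI (E₀ : Finset (Sym2 V)) (lam : V → ℝ) (S : Finset (Sym2 V)) (σ : V → Bool) : ℝ :=
  if S ⊆ monoEdges E₀ σ then
    ∏ C ∈ kappa S, ((∏ v ∈ C, if σ v then lam v else 1) / (1 + ∏ v ∈ C, lam v))
  else 0

/-- Swendsen-Wang dynamics for the Ising model: `P_{I→R} ⬝ P_{R→I}`. -/
def PSWIsing (E₀ : Finset (Sym2 V)) (β : Sym2 V → ℝ) (lam : V → ℝ) (σ τ : V → Bool) : ℝ :=
  ∑ S ∈ E₀.powerset, PIR E₀ β σ S * PRI E₀ lam S τ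

/-- Swendsen-Wang dynamics for the weighted random cluster model: `P_{R→I} ⬝ P_{I→R}`. -/
def PSWwrc (E₀ : Finset (Sym2 V)) (β : Sym2 V → ℝ) (lam : V → ℝ)
    (S S' : Finset (Sym2 V)) : ℝ :=
  ∑ σ : V → Bool, PRI E₀ lam S σ * PIR E₀ β σ S'

/-- Lazy edge-flipping (Metropolis) dynamics for a distribution `pi` on subsets of `E₀`. -/
def PEF (E₀ : Finset (Sym2 V)) (pi : Finset (Sym2 V) → ℝ) (x y : Finset (Sym2 V)) : ℝ :=
  if x = y then
    1 - (1 / (2 * (E₀.card : ℝ))) * ∑ e ∈ E₀, min 1 (pi (symmDiff x {e}) / pi x)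
  else if (symmDiff x y).card = 1 then
    (1 / (2 * (E₀.card : ℝ))) * min 1 (pi y / pi x)
  else 0

/-- Variance of `f` with respect to a distribution `pi` supported on `states`. -/
def varOn {α : Type*} (states : Finset α) (pi f : α → ℝ) : ℝ :=
  (∑ x ∈ states, pi x * f x ^ 2) - (∑ x ∈ states, pi x * f x) ^ 2

/-- Dirichlet form of a Markov kernel `P` with stationary distribution `pi` on `states`. -/
def dirichletOn {α : Type*} (states : Finset α) (pi : α → ℝ) (P : α → α → ℝ) (f : α → ℝ) : ℝ :=
  ∑ x ∈ states, pi x * f x * (f x - ∑ y ∈ states, P x y * f y)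

/-- Spectral gap of a reversible Markov kernel `P` with stationary distribution `pi`. -/
def gapOn {α : Type*} (states : Finset α) (pi : α → ℝ) (P : α → α → ℝ) : ℝ :=
  sInf ((fun f : α → ℝ => dirichletOn states pi P f / varOn states pi f) ''
    {f | varOn states pi f ≠ 0})

/-- Total variation distance between two distributions on `states`. -/
def dTV {α : Type*} (states : Finset α) (μ ν : α → ℝ) : ℝ :=
  (1 / 2) * ∑ z ∈ states, |μ z - ν z|

/-- `t`-step transition probabilities of the Markov kernel `P` on state space `states`. -/
def kpow {α : Type*} (states : Finset α) (P : α → α → ℝ) : ℕ → α → α → ℝ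
  | 0 => fun x y => if x = y then 1 else 0
  | (t + 1) => fun x y => ∑ z ∈ states, P x z * kpow states P t z y



set_option linter.unusedSectionVars false

lemma mem_compOf {S : Finset (Sym2 V)} {v u : V} :
    u ∈ compOf S v ↔ (SimpleGraph.fromEdgeSet (↑S : Set (Sym2 V))).Reachable v u := by
  simp [compOf]

lemma compOf_eq_of_reachable {S : Finset (Sym2 V)} {v u : V}
    (h : (SimpleGraph.fromEdgeSet (↑S : Set (Sym2 V))).Reachable v u) :
    compOf S v = compOf S u := by
  ext x
  simp only [mem_compOf]
  exact ⟨fun hx => h.symm.trans hx, fun hx => h.trans hx⟩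

lemma kappa_pairwiseDisjoint (S : Finset (Sym2 V)) :
    Set.PairwiseDisjoint (↑(kappa S)) (id : Finset V → Finset V) := by
  intro C₁ h1 C₂ h2 hne
  rw [Finset.mem_coe, kappa, Finset.mem_image] at h1 h2
  obtain ⟨v, -, rfl⟩ := h1
  obtain ⟨u, -, rfl⟩ := h2
  rw [Function.onFun, id, id, Finset.disjoint_left]
  intro w hw1 hw2
  exact hne (compOf_eq_of_reachable ((mem_compOf.mp hw1).trans (mem_compOf.mp hw2).symm))

lemma kappa_biUnion (S : Finset (Sym2 V)) : (kappa S).biUnion id = Finset.univ := by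
  ext v
  simp only [Finset.mem_biUnion, id, Finset.mem_univ, iff_true]
  exact ⟨compOf S v, Finset.mem_image.mpr ⟨v, Finset.mem_univ v, rfl⟩,
    mem_compOf.mpr (SimpleGraph.Reachable.refl v)⟩

lemma prod_kappa (S : Finset (Sym2 V)) (f : V → ℝ) :
    ∏ C ∈ kappa S, ∏ v ∈ C, f v = ∏ v, f v := by
  have := Finset.prod_biUnion (f := f) (kappa_pairwiseDisjoint S)
  rw [kappa_biUnion] at this
  exact this.symm

lemma cancel_aux {β : Sym2 V → ℝ} {A B : Finset (Sym2 V)} (h : B ⊆ A)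
    (hne : ∀ e ∈ A, β e ≠ 0) :
    (∏ e ∈ A, β e) * ∏ f ∈ A \ B, (β f)⁻¹ = ∏ e ∈ B, β e := by
  rw [← Finset.prod_sdiff h, mul_comm (∏ f ∈ A \ B, β f), mul_assoc,
    ← Finset.prod_mul_distrib]
  rw [Finset.prod_congr rfl (fun e he => mul_inv_cancel₀ (hne e ((Finset.mem_sdiff.mp he).1)))]
  simp

/-- The Edwards–Sokal identity: the two factorizations of the joint distribution agree. -/
lemma esKey (E₀ : Finset (Sym2 V)) (β : Sym2 V → ℝ) (lam : V → ℝ)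
    (hβ : ∀ e ∈ E₀, 1 < β e) (hlam : ∀ v : V, 0 < lam v)
    (S : Finset (Sym2 V)) (hS : S ⊆ E₀) (σ : V → Bool) :
    wtIsing E₀ β lam σ * PIR E₀ β σ S
      = (∏ e ∈ E₀, β e) * wtWRC E₀ (fun e => 1 - (β e)⁻¹) lam S * PRI E₀ lam S σ := by
  have hβ0 : ∀ e ∈ E₀, β e ≠ 0 := fun e he => ne_of_gt (lt_trans one_pos (hβ e he))
  unfold wtIsing PIR wtWRC PRI clusterProd
  by_cases hmem : S ⊆ monoEdges E₀ σ
  · simp only [hmem, if_true, sub_sub_cancel]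
    have hM : monoEdges E₀ σ ⊆ E₀ := Finset.filter_subset _ _
    have c1 : (∏ e ∈ monoEdges E₀ σ, β e) * ∏ f ∈ monoEdges E₀ σ \ S, (β f)⁻¹
        = ∏ e ∈ S, β e := cancel_aux hmem (fun e he => hβ0 e (hM he))
    have c2 : (∏ e ∈ E₀, β e) * ∏ f ∈ E₀ \ S, (β f)⁻¹ = ∏ e ∈ S, β e :=
      cancel_aux hS hβ0
    have c3 : (∏ C ∈ kappa S, (1 + ∏ u ∈ C, lam u)) *
        ∏ C ∈ kappa S, ((∏ v ∈ C, if σ v then lam v else 1) / (1 + ∏ v ∈ C, lam v))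
        = ∏ v : V, (if σ v then lam v else 1) := by
      rw [← Finset.prod_mul_distrib]
      rw [Finset.prod_congr rfl (fun C _ => ?_), prod_kappa]
      have hpos : (0:ℝ) < 1 + ∏ u ∈ C, lam u :=
        add_pos one_pos (Finset.prod_pos fun u _ => hlam u)
      rw [mul_comm, div_mul_cancel₀ _ (ne_of_gt hpos)]
    linear_combination
      ((∏ e ∈ S, (1 - (β e)⁻¹)) * (∏ v : V, (if σ v then lam v else 1))) * c1
      - ((∏ e ∈ S, (1 - (β e)⁻¹)) * (∏ e ∈ E₀, β e) * (∏ f ∈ E₀ \ S, (β f)⁻¹)) * c3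
      - ((∏ e ∈ S, (1 - (β e)⁻¹)) * (∏ v : V, (if σ v then lam v else 1))) * c2
  · simp [hmem]

/-- A two-step kernel whose joint weights factor symmetrically gives a PSD quadratic form. -/
lemma psd_general {α : Type*} {ι : Type*} (sα : Finset α) (sι : Finset ι)
    (A : α → ι → ℝ) (B : ι → α → ℝ) (w : ι → ℝ) (pi : α → ℝ)
    (hw : ∀ i ∈ sι, 0 ≤ w i)
    (hkey : ∀ i ∈ sι, ∀ a ∈ sα, pi a * A a i = w i * B i a)
    (h : α → ℝ) :
    0 ≤ ∑ a ∈ sα, pi a * h a * (∑ b ∈ sα, (∑ i ∈ sι, A a i * B i b) * h b) := by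
  have key : ∑ a ∈ sα, pi a * h a * (∑ b ∈ sα, (∑ i ∈ sι, A a i * B i b) * h b)
      = ∑ i ∈ sι, w i * (∑ a ∈ sα, B i a * h a) ^ 2 := by
    have lhs : ∑ a ∈ sα, pi a * h a * (∑ b ∈ sα, (∑ i ∈ sι, A a i * B i b) * h b)
        = ∑ i ∈ sι, ∑ a ∈ sα, ∑ b ∈ sα, (pi a * A a i) * (B i b * h b) * h a := by
      rw [Finset.sum_comm]
      refine Finset.sum_congr rfl fun a _ => ?_
      simp only [Finset.mul_sum, Finset.sum_mul]
      rw [Finset.sum_comm]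
      exact Finset.sum_congr rfl fun i _ => Finset.sum_congr rfl fun b _ => by ring
    rw [lhs]
    refine Finset.sum_congr rfl fun i hi => ?_
    rw [show ∑ a ∈ sα, ∑ b ∈ sα, (pi a * A a i) * (B i b * h b) * h a
        = ∑ a ∈ sα, ∑ b ∈ sα, (w i * B i a) * (B i b * h b) * h a from
      Finset.sum_congr rfl fun a ha => Finset.sum_congr rfl fun b _ => by
        rw [hkey i hi a ha]]
    calc ∑ a ∈ sα, ∑ b ∈ sα, (w i * B i a) * (B i b * h b) * h a
        = ∑ a ∈ sα, (w i * B i a * h a) * ∑ b ∈ sα, B i b * h b := by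
          refine Finset.sum_congr rfl fun a _ => ?_
          rw [Finset.mul_sum]
          exact Finset.sum_congr rfl fun b _ => by ring
      _ = (∑ a ∈ sα, w i * (B i a * h a)) * ∑ b ∈ sα, B i b * h b := by
          rw [Finset.sum_mul]
          exact Finset.sum_congr rfl fun a _ => by ring
      _ = w i * (∑ a ∈ sα, B i a * h a) ^ 2 := by
          rw [← Finset.mul_sum]; ring
  rw [key]
  exact Finset.sum_nonneg fun i hi => mul_nonneg (hw i hi) (sq_nonneg _)

lemma wtIsing_pos {E₀ : Finset (Sym2 V)} {β : Sym2 V → ℝ} {lam : V → ℝ}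
    (hβ : ∀ e ∈ E₀, 1 < β e) (hlam : ∀ v : V, 0 < lam v) (σ : V → Bool) :
    0 < wtIsing E₀ β lam σ := by
  refine mul_pos (Finset.prod_pos fun e he => lt_trans one_pos
    (hβ e (Finset.filter_subset _ _ he))) (Finset.prod_pos fun v _ => ?_)
  split <;> [exact hlam v; exact one_pos]

lemma ZIsing_pos {E₀ : Finset (Sym2 V)} {β : Sym2 V → ℝ} {lam : V → ℝ}
    (hβ : ∀ e ∈ E₀, 1 < β e) (hlam : ∀ v : V, 0 < lam v) :
    0 < ZIsing E₀ β lam :=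
  Finset.sum_pos (fun σ _ => wtIsing_pos hβ hlam σ) Finset.univ_nonempty

lemma wtWRC_pos {E₀ : Finset (Sym2 V)} {β : Sym2 V → ℝ} {lam : V → ℝ}
    (hβ : ∀ e ∈ E₀, 1 < β e) (hlam : ∀ v : V, 0 < lam v)
    {S : Finset (Sym2 V)} (hS : S ⊆ E₀) :
    0 < wtWRC E₀ (fun e => 1 - (β e)⁻¹) lam S := by
  unfold wtWRC clusterProd
  refine mul_pos (mul_pos (Finset.prod_pos fun e he => ?_)
    (Finset.prod_pos fun f hf => ?_))
    (Finset.prod_pos fun C _ => add_pos one_pos (Finset.prod_pos fun u _ => hlam u))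
  · have h1 := hβ e (hS he)
    have : (β e)⁻¹ < 1 := inv_lt_one_of_one_lt₀ h1
    linarith
  · have h1 := hβ f ((Finset.mem_sdiff.mp hf).1)
    have : (0:ℝ) < (β f)⁻¹ := inv_pos.mpr (lt_trans one_pos h1)
    linarith

lemma ZWRC_pos {E₀ : Finset (Sym2 V)} {β : Sym2 V → ℝ} {lam : V → ℝ}
    (hβ : ∀ e ∈ E₀, 1 < β e) (hlam : ∀ v : V, 0 < lam v) :
    0 < ZWRC E₀ (fun e => 1 - (β e)⁻¹) lam :=
  Finset.sum_pos (fun S hS => wtWRC_pos hβ hlam (Finset.mem_powerset.mp hS))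
    ⟨∅, Finset.mem_powerset.mpr (Finset.empty_subset _)⟩


/-- Positive semidefiniteness of the Swendsen-Wang dynamics with respect to the stationary
inner products, with `q_e = 1 − 1/β_e`. -/
theorem sw_posSemidef {V : Type*} [Fintype V] [DecidableEq V]
    (G : SimpleGraph V) [DecidableRel G.Adj]
    (β : Sym2 V → ℝ) (lam : V → ℝ)
    (hβ : ∀ e ∈ G.edgeFinset, 1 < β e)
    (hlam : ∀ v : V, 0 < lam v ∧ lam v ≤ 1) :
    (∀ h : (V → Bool) → ℝ,
      0 ≤ ∑ σ : V → Bool, piIsing G.edgeFinset β lam σ * h σ *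
        (∑ τ : V → Bool, PSWIsing G.edgeFinset β lam σ τ * h τ)) ∧
    (∀ g : Finset (Sym2 V) → ℝ,
      0 ≤ ∑ S ∈ G.edgeFinset.powerset,
        piWRC G.edgeFinset (fun e => 1 - (β e)⁻¹) lam S * g S *
          (∑ S' ∈ G.edgeFinset.powerset, PSWwrc G.edgeFinset β lam S S' * g S')) := by
  set E₀ := G.edgeFinset with hE₀
  have hlam' : ∀ v : V, 0 < lam v := fun v => (hlam v).1
  have hZI : 0 < ZIsing E₀ β lam := ZIsing_pos hβ hlam'
  have hPβ : 0 < ∏ e ∈ E₀, β e := Finset.prod_pos fun e he => lt_trans one_pos (hβ e he)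
  have hZW : 0 < ZWRC E₀ (fun e => 1 - (β e)⁻¹) lam := ZWRC_pos hβ hlam'
  constructor
  · intro h
    simp only [PSWIsing]
    refine psd_general Finset.univ E₀.powerset (PIR E₀ β) (PRI E₀ lam)
      (fun S => (∏ e ∈ E₀, β e) * wtWRC E₀ (fun e => 1 - (β e)⁻¹) lam S / ZIsing E₀ β lam)
      (piIsing E₀ β lam) (fun S hS => div_nonneg (mul_nonneg hPβ.le
        (wtWRC_pos hβ hlam' (Finset.mem_powerset.mp hS)).le) hZI.le) ?_ h
    intro S hS σ _
    unfold piIsing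
    rw [div_mul_eq_mul_div, esKey E₀ β lam hβ hlam' S (Finset.mem_powerset.mp hS) σ]
    ring
  · intro g
    simp only [PSWwrc]
    refine psd_general E₀.powerset Finset.univ (fun S σ => PRI E₀ lam S σ)
      (fun σ S => PIR E₀ β σ S)
      (fun σ => wtIsing E₀ β lam σ / ((∏ e ∈ E₀, β e) * ZWRC E₀ (fun e => 1 - (β e)⁻¹) lam))
      (piWRC E₀ (fun e => 1 - (β e)⁻¹) lam)
      (fun σ _ => div_nonneg (wtIsing_pos hβ hlam' σ).le (mul_nonneg hPβ.le hZW.le)) ?_ g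
    intro σ _ S hS
    have hk := esKey E₀ β lam hβ hlam' S (Finset.mem_powerset.mp hS) σ
    unfold piWRC
    rw [div_mul_eq_mul_div, div_mul_eq_mul_div,
      div_eq_div_iff (ne_of_gt hZW) (ne_of_gt (mul_pos hPβ hZW))]
    linear_combination (ZWRC E₀ (fun e => 1 - (β e)⁻¹) lam) * hk.symm

end
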